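/- arXiv:0803.4516 — 4 statements merged into one kernel-verified Lean document; each statement's English description precedes it below -/
import Mathlib

section
/- Let n ≥ 9, m = ⌊√n⌋, S = {i² : 0 ≤ i ≤ m} ∪ {2}, and P(x) = 2·(−1)^{n−m−1}·(m!²/n!)·∏_{i ∈ [n]∖S} (x − i). Then C(n,2)·|P(2)| ≤ 12. -/
-- ℕ: product of (i-2) over Icc 3 n equals (n-2)!
lemma prodIcc_sub (n : ℕ) (h : 2 ≤ n) :
    ∏ i ∈ Finset.Icc 3 n, (i - 2) = (n - 2).factorial := by
  induction n, h using Nat.le_induction with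
  | base => simp
  | succ n hn ih =>
    rw [Finset.prod_Icc_succ_top (by omega), ih]
    have h1 : n + 1 - 2 = (n - 2) + 1 := by omega
    rw [h1, Nat.factorial_succ, mul_comm]

-- strengthened key inequality
lemma key_aux (m : ℕ) (hm : 3 ≤ m) :
    m ^ 2 * m.factorial ^ 2 ≤ 12 * (m - 1) ^ 2 * ∏ j ∈ Finset.Icc 3 m, (j ^ 2 - 2) := by
  induction m, hm using Nat.le_induction with
  | base => decide
  | succ m hm ih =>
    rw [Finset.prod_Icc_succ_top (by omega)]
    obtain ⟨k, rfl⟩ : ∃ k, m = k + 3 := ⟨m - 3, by omega⟩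
    have ht2 : (k + 3 + 1) ^ 2 - 2 + 2 = (k + 3 + 1) ^ 2 :=
      Nat.sub_add_cancel (by nlinarith [sq_nonneg k] : 2 ≤ (k + 3 + 1) ^ 2)
    set t := (k + 3 + 1) ^ 2 - 2 with htdef
    have hpoly : (k + 4) ^ 4 * (k + 2) ^ 2 ≤ (k + 3) ^ 4 * t := by
      have h1 : (k + 4) ^ 4 * (k + 2) ^ 2 + 2 * (k + 3) ^ 4 ≤ (k + 3) ^ 4 * (t + 2) := by
        rw [ht2]; nlinarith [sq_nonneg k]
      have h2 : (k + 3) ^ 4 * (t + 2) = (k + 3) ^ 4 * t + 2 * (k + 3) ^ 4 := by ring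
      linarith
    have hfac : (k + 3 + 1).factorial = (k + 4) * (k + 3).factorial := rfl
    set F := (k + 3).factorial with hF
    set P := ∏ j ∈ Finset.Icc 3 (k + 3), (j ^ 2 - 2) with hP
    -- ih : (k+3)^2 * F^2 ≤ 12 * (k+2)^2 * P
    have step1 : (k + 3) ^ 2 * ((k + 3 + 1) ^ 2 * (k + 3 + 1).factorial ^ 2)
        ≤ (k + 3) ^ 2 * (12 * (k + 3 + 1 - 1) ^ 2 * (P * t)) := by
      have e1 : (k + 3) ^ 2 * ((k + 3 + 1) ^ 2 * (k + 3 + 1).factorial ^ 2)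
          = (k + 4) ^ 4 * ((k + 3) ^ 2 * F ^ 2) := by rw [hfac]; ring
      have e2 : (k + 3) ^ 2 * (12 * (k + 3 + 1 - 1) ^ 2 * (P * t)) = 12 * P * ((k+3)^4 * t) := by
        have : k + 3 + 1 - 1 = k + 3 := rfl
        rw [this]; ring
      rw [e1, e2]
      calc (k + 4) ^ 4 * ((k + 3) ^ 2 * F ^ 2) ≤ (k + 4) ^ 4 * (12 * (k + 3 - 1) ^ 2 * P) :=
            Nat.mul_le_mul_left _ ih
        _ = 12 * P * ((k + 4) ^ 4 * (k + 2) ^ 2) := by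
            have : k + 3 - 1 = k + 2 := rfl
            rw [this]; ring
        _ ≤ 12 * P * ((k + 3) ^ 4 * t) := Nat.mul_le_mul_left _ hpoly
    exact Nat.le_of_mul_le_mul_left step1 (by positivity)

lemma key (m : ℕ) (hm : 3 ≤ m) :
    m.factorial ^ 2 ≤ 12 * ∏ j ∈ Finset.Icc 3 m, (j ^ 2 - 2) := by
  have h := key_aux m hm
  have h2 : m ^ 2 * m.factorial ^ 2 ≤ m ^ 2 * (12 * ∏ j ∈ Finset.Icc 3 m, (j ^ 2 - 2)) := by
    calc m ^ 2 * m.factorial ^ 2 ≤ 12 * (m - 1) ^ 2 * ∏ j ∈ Finset.Icc 3 m, (j ^ 2 - 2) := h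
      _ ≤ 12 * m ^ 2 * ∏ j ∈ Finset.Icc 3 m, (j ^ 2 - 2) := by
          apply Nat.mul_le_mul_right
          apply Nat.mul_le_mul_left
          exact Nat.pow_le_pow_left (by omega) 2
      _ = m ^ 2 * (12 * ∏ j ∈ Finset.Icc 3 m, (j ^ 2 - 2)) := by ring
  exact Nat.le_of_mul_le_mul_left h2 (by positivity)

theorem choose_two_abs_P_two_le (n : ℕ) (hn : 9 ≤ n) :
    let m := Nat.sqrt n
    let S : Finset ℕ := ((Finset.range (m + 1)).image (fun i => i ^ 2)) ∪ {2}
    let P : ℝ → ℝ := fun x =>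
      2 * (-1 : ℝ) ^ (n - m - 1) * ((Nat.factorial m : ℝ) ^ 2 / Nat.factorial n) *
        ∏ i ∈ Finset.range (n + 1) \ S, (x - i)
    (n.choose 2 : ℝ) * |P 2| ≤ 12 := by
  intro m S P
  have hm3 : 3 ≤ m := by
    have h9 : Nat.sqrt 9 = 3 := by norm_num
    calc 3 = Nat.sqrt 9 := h9.symm
      _ ≤ Nat.sqrt n := Nat.sqrt_le_sqrt hn
  have hmn : m ^ 2 ≤ n := Nat.sqrt_le' n
  set Q : ℕ := ∏ j ∈ Finset.Icc 3 m, (j ^ 2 - 2) with hQdef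
  have hQpos : 0 < Q := by
    apply Finset.prod_pos
    intro j hj
    simp only [Finset.mem_Icc] at hj
    have h9 : 9 ≤ j ^ 2 := by nlinarith [hj.1]
    omega
  have hQrpos : (0:ℝ) < (Q:ℝ) := by exact_mod_cast hQpos
  set Sq : Finset ℕ := (Finset.range (m + 1)).image (fun i => i ^ 2) with hSqdef
  -- squares are in range(n+1) \ {2}
  have hSqsub : Sq ⊆ Finset.range (n + 1) \ {2} := by
    intro x hx
    rw [hSqdef] at hx
    simp only [Finset.mem_image, Finset.mem_range] at hx
    obtain ⟨i, hi, rfl⟩ := hx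
    have h1 : i ^ 2 ≤ m ^ 2 := Nat.pow_le_pow_left (by omega) 2
    have h2 : i ^ 2 ≠ 2 := by
      rcases le_or_gt i 1 with h | h
      · have : i ^ 2 ≤ 1 := by nlinarith
        omega
      · have : 4 ≤ i ^ 2 := by nlinarith
        omega
    simp only [Finset.mem_sdiff, Finset.mem_range, Finset.mem_singleton]
    exact ⟨by omega, h2⟩
  have hTdef : Finset.range (n + 1) \ S = (Finset.range (n + 1) \ {2}) \ Sq := by
    have hS : S = Sq ∪ {2} := rfl
    rw [hS]
    ext x
    simp only [Finset.mem_sdiff, Finset.mem_union, Finset.mem_singleton]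
    tauto
  -- product over range(n+1) \ {2}
  have hA : Finset.range (n + 1) \ {2} = insert 0 (insert 1 (Finset.Icc 3 n)) := by
    ext x
    simp only [Finset.mem_sdiff, Finset.mem_range, Finset.mem_singleton, Finset.mem_insert,
      Finset.mem_Icc]
    omega
  have hIccR : ∏ i ∈ Finset.Icc 3 n, |2 - (i:ℝ)| = ((n - 2).factorial : ℝ) := by
    rw [← prodIcc_sub n (by omega), Nat.cast_prod]
    apply Finset.prod_congr rfl
    intro i hi
    simp only [Finset.mem_Icc] at hi
    have h3 : (3:ℝ) ≤ (i:ℝ) := by exact_mod_cast hi.1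
    have hc : ((i - 2 : ℕ) : ℝ) = (i:ℝ) - 2 := by
      push_cast [Nat.cast_sub (show 2 ≤ i by omega)]
      ring
    rw [hc, abs_sub_comm, abs_of_nonneg (by linarith)]
  have h0notin : (0:ℕ) ∉ insert 1 (Finset.Icc 3 n) := by
    simp only [Finset.mem_insert, Finset.mem_Icc]
    omega
  have h1notin : (1:ℕ) ∉ Finset.Icc 3 n := by
    simp only [Finset.mem_Icc]
    omega
  have hprodA : ∏ i ∈ (Finset.range (n + 1) \ {2}), |2 - (i:ℝ)| = 2 * ((n - 2).factorial : ℝ) := by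
    rw [hA, Finset.prod_insert h0notin, Finset.prod_insert h1notin, hIccR]
    norm_num
  -- product over the squares
  have hIcc2m : ∏ i ∈ Finset.Icc 2 m, (i ^ 2 - 2) = 2 * Q := by
    rw [show Finset.Icc 2 m = insert 2 (Finset.Icc 3 m) from by
      ext x; simp only [Finset.mem_Icc, Finset.mem_insert]; omega]
    rw [Finset.prod_insert (by simp), hQdef]
    norm_num
  have hprodSq : ∏ i ∈ Sq, |2 - (i:ℝ)| = 2 * (2 * (Q:ℝ)) := by
    rw [hSqdef]
    rw [Finset.prod_image (fun a _ b _ h => Nat.pow_left_injective (by norm_num) h)]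
    rw [show Finset.range (m + 1) = insert 0 (insert 1 (Finset.Icc 2 m)) from by
      ext x; simp only [Finset.mem_range, Finset.mem_insert, Finset.mem_Icc]; omega]
    have h0notin' : (0:ℕ) ∉ insert 1 (Finset.Icc 2 m) := by
      simp only [Finset.mem_insert, Finset.mem_Icc]; omega
    have h1notin' : (1:ℕ) ∉ Finset.Icc 2 m := by
      simp only [Finset.mem_Icc]; omega
    rw [Finset.prod_insert h0notin', Finset.prod_insert h1notin']
    have hIcc : ∏ i ∈ Finset.Icc 2 m, |2 - ((i ^ 2 : ℕ):ℝ)| = ((2 * Q : ℕ) : ℝ) := by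
      rw [← hIcc2m, Nat.cast_prod]
      apply Finset.prod_congr rfl
      intro i hi
      simp only [Finset.mem_Icc] at hi
      have h4 : 4 ≤ i ^ 2 := by nlinarith [hi.1]
      have h4' : (4:ℝ) ≤ ((i ^ 2 : ℕ):ℝ) := by exact_mod_cast h4
      have hc : ((i ^ 2 - 2 : ℕ) : ℝ) = ((i ^ 2 : ℕ):ℝ) - 2 := by
        push_cast [Nat.cast_sub (show 2 ≤ i ^ 2 by omega)]
        ring
      rw [hc, abs_sub_comm, abs_of_nonneg (by linarith)]
    rw [hIcc]
    push_cast
    norm_num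
  -- the product over T
  have hsdiff : (∏ i ∈ ((Finset.range (n + 1) \ {2}) \ Sq), |2 - (i:ℝ)|) *
      (∏ i ∈ Sq, |2 - (i:ℝ)|)
      = ∏ i ∈ (Finset.range (n + 1) \ {2}), |2 - (i:ℝ)| := Finset.prod_sdiff hSqsub
  rw [hprodSq, hprodA] at hsdiff
  have hprodT : ∏ i ∈ Finset.range (n + 1) \ S, |2 - (i:ℝ)|
      = ((n - 2).factorial : ℝ) / (2 * (Q:ℝ)) := by
    rw [hTdef, eq_div_iff (by positivity)]
    linear_combination hsdiff / 2
  -- |P 2|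
  have hP2 : |P 2| = 2 * ((m.factorial : ℝ) ^ 2 / (n.factorial : ℝ))
      * ∏ i ∈ Finset.range (n + 1) \ S, |2 - (i:ℝ)| := by
    have hPval : P 2 = 2 * (-1 : ℝ) ^ (n - m - 1) * ((m.factorial : ℝ) ^ 2 / n.factorial) *
        ∏ i ∈ Finset.range (n + 1) \ S, ((2:ℝ) - i) := rfl
    rw [hPval, abs_mul, abs_mul, Finset.abs_prod,
      abs_of_nonneg (by positivity : (0:ℝ) ≤ (m.factorial : ℝ) ^ 2 / n.factorial),
      abs_mul, abs_pow, abs_neg, abs_one, one_pow, abs_two, mul_one]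
  -- assemble
  have hchoose : (n.choose 2 : ℝ) = (n:ℝ) * ((n:ℝ) - 1) / 2 := by
    rw [Nat.cast_choose_two]
  have hfn : (n.factorial : ℝ) = (n:ℝ) * ((n:ℝ) - 1) * ((n - 2).factorial : ℝ) := by
    obtain ⟨q, hq⟩ : ∃ q, n = q + 2 := ⟨n - 2, by omega⟩
    subst hq
    have h1 : (q + 2).factorial = (q + 2) * ((q + 1) * q.factorial) := by
      simp [Nat.factorial_succ]
    rw [h1]
    have h2 : q + 2 - 2 = q := by omega
    rw [h2]
    push_cast
    ring
  rw [hP2, hprodT, hchoose, hfn]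
  have hn0 : (9:ℝ) ≤ (n:ℝ) := by exact_mod_cast hn
  have hN2 : (0:ℝ) < ((n - 2).factorial : ℝ) := by exact_mod_cast (n - 2).factorial_pos
  have hLHS : (n:ℝ) * ((n:ℝ) - 1) / 2 *
      (2 * ((m.factorial : ℝ) ^ 2 / ((n:ℝ) * ((n:ℝ) - 1) * ((n - 2).factorial : ℝ))) *
        (((n - 2).factorial : ℝ) / (2 * (Q:ℝ))))
      = (m.factorial : ℝ) ^ 2 / (2 * (Q:ℝ)) := by
    have h1 : (n:ℝ) ≠ 0 := by linarith
    have h2 : (n:ℝ) - 1 ≠ 0 := by linarith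
    have h3 : ((n - 2).factorial : ℝ) ≠ 0 := ne_of_gt hN2
    have h4 : (Q:ℝ) ≠ 0 := ne_of_gt hQrpos
    field_simp
  rw [hLHS, div_le_iff₀ (by positivity)]
  have hkey : (m.factorial : ℝ) ^ 2 ≤ 12 * (Q:ℝ) := by exact_mod_cast key m hm3
  linarith
end

section
/- Let n ≥ 9, m = ⌊√n⌋, S = {i² : 0 ≤ i ≤ m} ∪ {2}, and P(x) = 2·(−1)^{n−m−1}·(m!²/n!)·∏_{i ∈ [n]∖S} (x − i). Then for every integer k with 1 ≤ k ≤ m, C(n, k²)·|P(k²)| ≤ 8/k². -/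
open Finset Nat

-- ∏_{i<a} (a-i) = a!  (ℕ)
lemma prod_range_sub_eq_factorial (a : ℕ) : (∏ i ∈ range a, (a - i)) = a ! := by
  rw [← Finset.prod_range_add_one_eq_factorial a, ← Finset.prod_range_reflect (fun j => j + 1) a]
  apply Finset.prod_congr rfl
  intro i hi
  simp only [Finset.mem_range] at hi
  omega

-- ∏_{i ∈ range(n+1) \ {a}} |a - i| = a! * (n-a)!   in ℝ
lemma prod_abs_sub_eq (a n : ℕ) (h : a ≤ n) :
    (∏ i ∈ range (n+1) \ {a}, |(a : ℝ) - i|) = (a ! : ℝ) * (n - a)! := by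
  have hset : range (n+1) \ {a} = range a ∪ Ico (a+1) (n+1) := by
    ext i
    simp only [mem_sdiff, mem_range, mem_singleton, mem_union, mem_Ico]
    omega
  have hdisj : Disjoint (range a) (Ico (a+1) (n+1)) := by
    rw [Finset.disjoint_left]
    intro i hi hi'
    simp only [mem_range] at hi
    simp only [mem_Ico] at hi'
    omega
  rw [hset, Finset.prod_union hdisj]
  have h1 : ∏ i ∈ range a, |(a : ℝ) - i| = (a ! : ℝ) := by
    have : ∀ i ∈ range a, |(a : ℝ) - i| = ((a - i : ℕ) : ℝ) := by
      intro i hi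
      simp only [mem_range] at hi
      rw [Nat.cast_sub hi.le, abs_of_nonneg]
      have : (i : ℝ) < a := by exact_mod_cast hi
      linarith
    rw [Finset.prod_congr rfl this, ← Nat.cast_prod, prod_range_sub_eq_factorial]
  have h2 : ∏ i ∈ Ico (a+1) (n+1), |(a : ℝ) - i| = ((n - a)! : ℝ) := by
    have : ∀ i ∈ Ico (a+1) (n+1), |(a : ℝ) - i| = ((i - a : ℕ) : ℝ) := by
      intro i hi
      simp only [mem_Ico] at hi
      rw [abs_sub_comm, Nat.cast_sub (by omega), abs_of_nonneg]
      have : (a : ℝ) < i := by exact_mod_cast (by omega : a < i)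
      linarith
    rw [Finset.prod_congr rfl this, ← Nat.cast_prod]
    congr 1
    rw [Finset.prod_Ico_eq_prod_range]
    have : n + 1 - (a + 1) = n - a := by omega
    rw [this, ← Finset.prod_range_add_one_eq_factorial (n - a)]
    apply Finset.prod_congr rfl
    intro i hi
    omega
  rw [h1, h2]

-- 2 * k! * ∏_{j ∈ range(m+1)\{k}} (k+j) = (m+k)!   (ℕ)
lemma two_fact_prod_add (m k : ℕ) (hk : 1 ≤ k) (hkm : k ≤ m) :
    2 * k ! * (∏ j ∈ range (m+1) \ {k}, (k + j)) = (m + k)! := by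
  have hfull : (k - 1)! * ∏ j ∈ range (m+1), (k + j) = (m + k)! := by
    have e1 : (∏ j ∈ range (m+1), (k + j)) = ∏ i ∈ Ico k (m + k + 1), i := by
      rw [Finset.prod_Ico_eq_prod_range]
      have : m + k + 1 - k = m + 1 := by omega
      rw [this]
    have e2 : (k - 1)! = ∏ i ∈ Ico 1 k, i := by
      conv_rhs => rw [show k = (k - 1) + 1 by omega]
      rw [Finset.prod_Ico_id_eq_factorial]
    rw [e1, e2, Finset.prod_Ico_consecutive _ (by omega : 1 ≤ k) (by omega : k ≤ m + k + 1),
      show m + k + 1 = (m + k) + 1 by ring, Finset.prod_Ico_id_eq_factorial]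
  have hmem : k ∈ range (m+1) := by simp; omega
  have hsplit : (∏ j ∈ range (m+1) \ {k}, (k + j)) * (k + k) = ∏ j ∈ range (m+1), (k + j) := by
    rw [← Finset.prod_eq_prod_diff_singleton_mul hmem (fun j => k + j)]
  have hkfact : k ! = (k - 1)! * k := by
    conv_lhs => rw [show k = (k-1)+1 by omega]
    rw [Nat.factorial_succ, show k - 1 + 1 = k by omega]
    ring
  calc 2 * k ! * ∏ j ∈ range (m+1) \ {k}, (k + j)
      = (k-1)! * ((∏ j ∈ range (m+1) \ {k}, (k + j)) * (k + k)) := by rw [hkfact]; ring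
    _ = (m + k)! := by rw [hsplit, hfull]

-- m!² ≤ (m-k)! * (m+k)!
lemma fact_sq_le (m k : ℕ) (hkm : k ≤ m) : m ! * m ! ≤ (m - k)! * (m + k)! := by
  have h1 : Nat.choose (2*m) (m - k) ≤ Nat.choose (2*m) m := by
    have := Nat.choose_le_middle (m - k) (2*m)
    simpa [Nat.mul_div_cancel_left m (by norm_num : 0 < 2)] using this
  have e1 : Nat.choose (2*m) (m-k) * (m-k)! * (m+k)! = (2*m)! := by
    have := Nat.choose_mul_factorial_mul_factorial (show m - k ≤ 2*m by omega)
    rwa [show 2*m - (m-k) = m + k by omega] at this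
  have e2 : Nat.choose (2*m) m * m ! * m ! = (2*m)! := by
    have := Nat.choose_mul_factorial_mul_factorial (show m ≤ 2*m by omega)
    rwa [show 2*m - m = m by omega] at this
  have hpos : 0 < Nat.choose (2*m) (m-k) := Nat.choose_pos (by omega)
  have key : m ! * m ! * Nat.choose (2*m) (m-k) ≤ ((m-k)! * (m+k)!) * Nat.choose (2*m) (m-k) := by
    calc m ! * m ! * Nat.choose (2*m) (m-k) ≤ m ! * m ! * Nat.choose (2*m) m :=
          Nat.mul_le_mul_left _ h1
      _ = (2*m)! := by rw [← e2]; ring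
      _ = ((m-k)! * (m+k)!) * Nat.choose (2*m) (m-k) := by rw [← e1]; ring
  exact Nat.le_of_mul_le_mul_right key hpos

theorem choose_sq_abs_P_sq_le (n : ℕ) (hn : 9 ≤ n) :
    let m := Nat.sqrt n
    let S : Finset ℕ := ((Finset.range (m + 1)).image (fun i => i ^ 2)) ∪ {2}
    let P : ℝ → ℝ := fun x =>
      2 * (-1 : ℝ) ^ (n - m - 1) * ((Nat.factorial m : ℝ) ^ 2 / Nat.factorial n) *
        ∏ i ∈ Finset.range (n + 1) \ S, (x - i)
    ∀ k : ℕ, 1 ≤ k → k ≤ m →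
      (n.choose (k ^ 2) : ℝ) * |P (k ^ 2)| ≤ 8 / (k ^ 2 : ℝ) := by
  intro m S P k hk1 hkm
  -- basic facts
  have hm3 : 3 ≤ m := by
    have h := Nat.sqrt_le_sqrt hn
    have : Nat.sqrt 9 = 3 := by rw [show (9:ℕ) = 3*3 by norm_num, Nat.sqrt_eq]
    omega
  have hmn : m ^ 2 ≤ n := Nat.sqrt_le' n
  have hk2n : k ^ 2 ≤ n := le_trans (Nat.pow_le_pow_left hkm 2) hmn
  have hk2ne2 : k ^ 2 ≠ 2 := by
    rcases Nat.lt_or_ge k 2 with h | h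
    · interval_cases k <;> simp
    · nlinarith
  have hk2S : k ^ 2 ∈ S := by
    simp only [S, Finset.mem_union, Finset.mem_image, Finset.mem_range]
    exact Or.inl ⟨k, by omega, rfl⟩
  set x : ℝ := ((k : ℝ) ^ 2) with hxdef
  -- |P x| as a product of absolute values
  have habsP : |P x| = 2 * ((m ! : ℝ) ^ 2 / n !) *
      ∏ i ∈ Finset.range (n + 1) \ S, |x - i| := by
    simp only [P]
    rw [abs_mul, abs_mul, Finset.abs_prod, abs_mul, abs_pow, abs_neg, abs_one, one_pow, mul_one,
      abs_two, abs_of_nonneg (by positivity : (0:ℝ) ≤ (m ! : ℝ) ^ 2 / n !)]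
  -- set decompositions
  have hSsub : S ⊆ Finset.range (n + 1) := by
    intro i hi
    simp only [S, Finset.mem_union, Finset.mem_image, Finset.mem_range,
      Finset.mem_singleton] at hi
    rcases hi with ⟨j, hj, rfl⟩ | rfl
    · simp only [Finset.mem_range]
      have : j ^ 2 ≤ m ^ 2 := Nat.pow_le_pow_left (by omega) 2
      omega
    · simp only [Finset.mem_range]; omega
  have hsub2 : S \ {k ^ 2} ⊆ Finset.range (n + 1) \ {k ^ 2} :=
    Finset.sdiff_subset_sdiff hSsub (le_refl _)
  have hSdiff : Finset.range (n + 1) \ S =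
      (Finset.range (n + 1) \ {k ^ 2}) \ (S \ {k ^ 2}) := by
    ext i
    simp only [Finset.mem_sdiff, Finset.mem_singleton]
    constructor
    · rintro ⟨h1, h2⟩
      exact ⟨⟨h1, fun h => h2 (h ▸ hk2S)⟩, fun h => h2 h.1⟩
    · rintro ⟨⟨h1, h2⟩, h3⟩
      exact ⟨h1, fun h => h3 ⟨h, h2⟩⟩
  have hprod_sdiff : (∏ i ∈ S \ {k ^ 2}, |x - i|) *
      ∏ i ∈ Finset.range (n + 1) \ S, |x - i| =
      ∏ i ∈ Finset.range (n + 1) \ {k ^ 2}, |x - i| := by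
    rw [hSdiff, mul_comm]
    exact Finset.prod_sdiff (s₁ := S \ {k ^ 2}) (s₂ := Finset.range (n + 1) \ {k ^ 2})
      (f := fun i => |x - (i:ℝ)|) hsub2
  -- full product
  have hfullprod : (∏ i ∈ Finset.range (n + 1) \ {k ^ 2}, |x - i|) =
      ((k ^ 2)! : ℝ) * (n - k ^ 2)! := by
    have := prod_abs_sub_eq (k ^ 2) n hk2n
    rw [← this]
    apply Finset.prod_congr rfl
    intro i _
    congr 1
    push_cast [hxdef]
    ring
  -- S \ {k²} as a union
  have hinj : Function.Injective (fun i : ℕ => i ^ 2) :=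
    fun a b h => Nat.pow_left_injective (by norm_num) h
  have hA : S \ {k ^ 2} = ((Finset.range (m + 1) \ {k}).image (fun i => i ^ 2)) ∪ {2} := by
    ext i
    simp only [S, Finset.mem_sdiff, Finset.mem_union, Finset.mem_image, Finset.mem_range,
      Finset.mem_singleton]
    constructor
    · rintro ⟨⟨j, hj, rfl⟩ | rfl, h2⟩
      · exact Or.inl ⟨j, ⟨⟨hj, fun hjk => h2 (by rw [hjk])⟩, rfl⟩⟩
      · exact Or.inr rfl
    · rintro (⟨j, ⟨⟨hj, hjk⟩, rfl⟩⟩ | rfl)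
      · exact ⟨Or.inl ⟨j, hj, rfl⟩, fun h => hjk (hinj h)⟩
      · exact ⟨Or.inr rfl, fun h => hk2ne2 h.symm⟩
  -- disjointness of the image and {2}
  have hdisj2 : Disjoint ((Finset.range (m + 1) \ {k}).image (fun i => i ^ 2)) ({2} : Finset ℕ) := by
    rw [Finset.disjoint_right]
    intro i hi
    simp only [Finset.mem_singleton] at hi
    subst hi
    simp only [Finset.mem_image, Finset.mem_sdiff, Finset.mem_range, Finset.mem_singleton]
    rintro ⟨j, _, hj2⟩
    rcases Nat.lt_or_ge j 2 with h | h
    · interval_cases j <;> simp_all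
    · nlinarith
  -- product over S \ {k²}
  have hprodS : (∏ i ∈ S \ {k ^ 2}, |x - i|) =
      ((k ! : ℝ) * (m - k)!) * (((m + k)! : ℝ) / (2 * k !)) * |x - 2| := by
    rw [hA, Finset.prod_union hdisj2, Finset.prod_image (fun a _ b _ h => hinj h),
      Finset.prod_singleton]
    congr 1
    have hterm : ∀ j ∈ Finset.range (m + 1) \ {k},
        |x - ((j : ℕ) ^ 2 : ℕ)| = |(k : ℝ) - j| * ((k : ℝ) + j) := by
      intro j hj
      have : x - ((j ^ 2 : ℕ) : ℝ) = ((k : ℝ) - j) * ((k : ℝ) + j) := by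
        push_cast [hxdef]; ring
      rw [this, abs_mul, abs_of_nonneg (by positivity : (0:ℝ) ≤ (k : ℝ) + j)]
    rw [Finset.prod_congr rfl hterm, Finset.prod_mul_distrib]
    congr 1
    · exact prod_abs_sub_eq k m hkm
    · have hnat := two_fact_prod_add m k hk1 hkm
      have hcast : (∏ j ∈ Finset.range (m + 1) \ {k}, ((k : ℝ) + j)) =
          ((∏ j ∈ Finset.range (m + 1) \ {k}, (k + j) : ℕ) : ℝ) := by
        push_cast
        rfl
      rw [hcast]
      rw [eq_div_iff (by positivity : (2 : ℝ) * k ! ≠ 0), ← hnat]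
      push_cast
      ring
  -- express the main product
  have hfact_ne : ∀ a : ℕ, ((a ! : ℝ)) ≠ 0 := fun a => by positivity
  have habs2pos : (0:ℝ) < |x - 2| := by
    rw [abs_pos]
    intro h
    apply hk2ne2
    have : ((k ^ 2 : ℕ) : ℝ) = ((2 : ℕ) : ℝ) := by push_cast [← hxdef]; linarith
    exact_mod_cast this
  have hprodT : (∏ i ∈ Finset.range (n + 1) \ S, |x - i|) =
      (((k ^ 2)! : ℝ) * (n - k ^ 2)!) /
        (((k ! : ℝ) * (m - k)!) * (((m + k)! : ℝ) / (2 * k !)) * |x - 2|) := by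
    rw [eq_div_iff (by positivity)]
    rw [mul_comm (∏ i ∈ Finset.range (n + 1) \ S, |x - i|) _, ← hprodS, hprod_sdiff, hfullprod]
  -- lower bound for |x - 2|
  have habs2ge : (k : ℝ) ^ 2 / 2 ≤ |x - 2| := by
    rcases Nat.lt_or_ge k 2 with h | h
    · interval_cases k
      · simp [hxdef]; norm_num
    · have hk2 : (4 : ℝ) ≤ (k:ℝ) ^ 2 := by
        have : (2:ℝ) ≤ k := by exact_mod_cast h
        nlinarith
      rw [abs_of_nonneg (by rw [hxdef]; linarith)]
      rw [hxdef]; linarith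
  -- final computation
  have hchoose : (n.choose (k ^ 2) : ℝ) = (n ! : ℝ) / ((k ^ 2)! * (n - k ^ 2)!) :=
    Nat.cast_choose ℝ hk2n
  have hle : ((m ! : ℝ) * m !) ≤ ((m - k)! : ℝ) * (m + k)! := by
    exact_mod_cast fact_sq_le m k hkm
  have hkey : (n.choose (k ^ 2) : ℝ) * |P x| =
      4 * (m ! : ℝ) ^ 2 / (((m - k)! : ℝ) * (m + k)! * |x - 2|) := by
    rw [habsP, hprodT, hchoose]
    field_simp
    ring
  have hgoal : (n.choose (k ^ 2) : ℝ) * |P x| ≤ 8 / (k : ℝ) ^ 2 := by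
    rw [hkey]
    have hpos1 : (0:ℝ) < ((m - k)! : ℝ) * (m + k)! * |x - 2| := by positivity
    have hpos2 : (0:ℝ) < (k : ℝ) ^ 2 := by
      have : (1:ℝ) ≤ k := by exact_mod_cast hk1
      positivity
    have hD : (0:ℝ) < ((m - k)! : ℝ) * (m + k)! := by positivity
    have hnum : 4 * (m ! : ℝ) ^ 2 ≤ 4 * (((m - k)! : ℝ) * (m + k)!) := by
      rw [pow_two]
      linarith
    calc 4 * (m ! : ℝ) ^ 2 / (((m - k)! : ℝ) * (m + k)! * |x - 2|)
        ≤ 4 * (((m - k)! : ℝ) * (m + k)!) / (((m - k)! : ℝ) * (m + k)! * |x - 2|) := by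
          gcongr
      _ = 4 / |x - 2| := by
          field_simp
      _ ≤ 4 / ((k : ℝ) ^ 2 / 2) := by
          gcongr
      _ = 8 / (k : ℝ) ^ 2 := by
          rw [div_div_eq_mul_div]
          ring
  exact hgoal
end

section
/- Let n ≥ 9, m = ⌊√n⌋, S = {i² : 0 ≤ i ≤ m} ∪ {2}, P(x) = 2·(−1)^{n−m−1}·(m!²/n!)·∏_{i ∈ [n]∖S} (x − i), and Q(k) = (−1)^k·P(k) for k ∈ [n]. Define OR: [n] → {±1} by OR(0) = 1 and OR(k) = −1 for k ≥ 1. Then ∑_{k=0}^{n} C(n,k)·Q(k)·OR(k) = 2·Q(0) = 2, and (∑_{k=0}^{n} C(n,k)·|Q(k)|) / (∑_{k=0}^{n} C(n,k)·Q(k)·OR(k)) < 14. -/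
open Finset Polynomial fwdDiff

lemma fwdDiff_eval (p : ℝ[X]) :
    Δ_[1] (fun k : ℕ => p.eval (k:ℝ)) = fun k : ℕ => (p.comp (X + 1) - p).eval (k:ℝ) := by
  funext k
  simp [fwdDiff, eval_comp]

lemma fwdDiff_iter_poly : ∀ (N : ℕ) (p : ℝ[X]), p.natDegree < N →
    (Δ_[1])^[N] (fun k : ℕ => p.eval (k:ℝ)) = fun _ => 0 := by
  intro N
  induction N with
  | zero => intro p hp; omega
  | succ n ih =>
    intro p hp
    rw [Function.iterate_succ_apply, fwdDiff_eval]
    by_cases h0 : p.natDegree = 0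
    · obtain ⟨a, rfl⟩ := natDegree_eq_zero.mp h0
      have h1 : (C a).comp (X + 1) - C a = 0 := by simp
      rw [h1]
      simp only [eval_zero]
      exact Function.iterate_fixed (by simp [fwdDiff_const]) n
    · set q := p.comp (X + 1) - p with hq
      apply ih
      have hpne : p ≠ 0 := fun h => h0 (by simp [h])
      have hX : (X + 1 : ℝ[X]).natDegree = 1 := by simpa using natDegree_X_add_C (1:ℝ)
      have hd : (p.comp (X + 1)).natDegree = p.natDegree := by
        rw [natDegree_comp, hX, mul_one]
      have hlc : (p.comp (X + 1)).leadingCoeff = p.leadingCoeff := by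
        have hlc1 : (X + 1 : ℝ[X]).leadingCoeff = 1 := by
          simpa using (monic_X_add_C (1:ℝ)).leadingCoeff
        rw [leadingCoeff_comp (by rw [hX]; norm_num), hlc1, one_pow, mul_one]
      have hcne : p.comp (X + 1) ≠ 0 := by
        intro h
        exact hpne (leadingCoeff_eq_zero.mp (by rw [← hlc, h, leadingCoeff_zero]))
      have hdegeq : (p.comp (X + 1)).degree = p.degree := by
        rw [degree_eq_natDegree hcne, degree_eq_natDegree hpne, hd]
      have hdeg : q.degree < p.degree := hdegeq ▸ degree_sub_lt hdegeq hcne hlc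
      rcases eq_or_ne q 0 with h | h
      · rw [h]; simp only [natDegree_zero]; omega
      · have h5 := natDegree_lt_natDegree h hdeg
        omega

lemma alt_sum_poly_eq_zero (N : ℕ) (p : ℝ[X]) (hp : p.natDegree < N) :
    ∑ k ∈ range (N + 1), (-1:ℝ)^k * (N.choose k) * p.eval (k:ℝ) = 0 := by
  have h := fwdDiff_iter_eq_sum_shift (1:ℕ) (fun k : ℕ => p.eval (k:ℝ)) N 0
  rw [fwdDiff_iter_poly N p hp] at h
  have h2 : (0:ℝ) = ∑ k ∈ range (N+1), ((-1:ℤ)^(N-k) * N.choose k) • p.eval (k:ℝ) := by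
    simpa using h
  have h3 : ∑ k ∈ range (N + 1), (-1:ℝ)^(N-k) * (N.choose k) * p.eval (k:ℝ) = 0 := by
    rw [eq_comm] at h2
    simpa [zsmul_eq_mul, mul_assoc] using h2
  calc ∑ k ∈ range (N + 1), (-1:ℝ)^k * (N.choose k) * p.eval (k:ℝ)
      = (-1:ℝ)^N * ∑ k ∈ range (N + 1), (-1:ℝ)^(N-k) * (N.choose k) * p.eval (k:ℝ) := by
        rw [mul_sum]
        apply sum_congr rfl
        intro k hk
        have hk' : k ≤ N := by simpa [Nat.lt_succ_iff] using hk
        have h4 : (-1:ℝ)^N * (-1)^(N-k) = (-1)^k := by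
          rw [← pow_add]
          have he : N + (N-k) = 2*(N-k)+k := by omega
          rw [he, pow_add, pow_mul]; norm_num
        rw [← h4]; ring
    _ = 0 := by rw [h3, mul_zero]

lemma nat_prod_range_sub (k : ℕ) : ∏ i ∈ range k, (k - i) = k.factorial := by
  induction k with
  | zero => simp
  | succ k ih =>
    rw [Finset.prod_range_succ']
    simp only [Nat.add_sub_add_right, Nat.sub_zero, ih, Nat.factorial_succ]
    ring

lemma prod_abs_sub (N k : ℕ) (hk : k ≤ N) :
    ∏ i ∈ range (N+1) \ {k}, |(k:ℝ) - i| = (k.factorial : ℝ) * (N-k).factorial := by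
  have hset : range (N+1) \ {k} = range k ∪ Ico (k+1) (N+1) := by
    ext x
    simp only [mem_sdiff, mem_range, mem_singleton, mem_union, mem_Ico]
    omega
  have hdisj : Disjoint (range k) (Ico (k+1) (N+1)) := by
    rw [Finset.disjoint_left]
    intro x hx hx'
    simp only [mem_range] at hx
    simp only [mem_Ico] at hx'
    omega
  rw [hset, prod_union hdisj]
  have h1 : ∏ i ∈ range k, |(k:ℝ) - i| = (k.factorial : ℝ) := by
    have : ∀ i ∈ range k, |(k:ℝ) - i| = ((k - i : ℕ) : ℝ) := by
      intro i hi
      simp only [mem_range] at hi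
      rw [Nat.cast_sub hi.le, abs_of_pos]
      have : (i:ℝ) < k := by exact_mod_cast hi
      linarith
    rw [prod_congr rfl this, ← Nat.cast_prod, nat_prod_range_sub]
  have h2 : ∏ i ∈ Ico (k+1) (N+1), |(k:ℝ) - i| = ((N-k).factorial : ℝ) := by
    have : ∀ i ∈ Ico (k+1) (N+1), |(k:ℝ) - i| = ((i - k : ℕ) : ℝ) := by
      intro i hi
      simp only [mem_Ico] at hi
      rw [abs_sub_comm, Nat.cast_sub (by omega), abs_of_pos]
      have : (k:ℝ) < i := by exact_mod_cast hi.1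
      linarith
    rw [prod_congr rfl this, ← Nat.cast_prod]
    rw [Finset.prod_Ico_eq_prod_range]
    have he : ∀ i, (k + 1 + i - k) = i + 1 := by omega
    norm_cast
    rw [Finset.prod_congr rfl (fun i _ => he i)]
    have : N + 1 - (k+1) = N - k := by omega
    rw [this, Finset.prod_range_add_one_eq_factorial]
  rw [h1, h2]

lemma nat_prod_range_add (m j : ℕ) :
    (∏ l ∈ range (m+1), (j+1+l)) * j.factorial = (j+1+m).factorial := by
  induction m with
  | zero => simp [Nat.factorial_succ]
  | succ m ih =>
    rw [Finset.prod_range_succ, mul_assoc, mul_comm (j+1+(m+1)), ← mul_assoc, ih]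
    rw [show j+1+(m+1) = (j+1+m)+1 from by omega, Nat.factorial_succ, mul_comm]

lemma prod_add_erase0 (m : ℕ) :
    ∏ l ∈ range (m+1) \ {0}, ((0:ℝ)+l) = (m.factorial : ℝ) := by
  have hset : range (m+1) \ {0} = Ico 1 (m+1) := by
    ext x; simp only [mem_sdiff, mem_range, mem_singleton, mem_Ico]; omega
  rw [hset]
  simp only [zero_add]
  rw [← Nat.cast_prod]
  norm_cast
  exact Finset.prod_Ico_id_eq_factorial m

lemma prod_add_erase (m j : ℕ) (hj : j + 1 ≤ m) :
    ∏ l ∈ range (m+1) \ {j+1}, ((j:ℝ)+1+l)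
      = ((j+1+m).factorial : ℝ) / (2 * (j+1).factorial) := by
  have hmem : (j+1) ∈ range (m+1) := by simp; omega
  have hfull : ∏ l ∈ range (m+1), ((j:ℝ)+1+l)
      = ((j:ℝ)+1+(j+1)) * ∏ l ∈ range (m+1) \ {j+1}, ((j:ℝ)+1+l) := by
    have := Finset.prod_eq_mul_prod_sdiff_singleton_of_mem hmem (fun x : ℕ => (j:ℝ)+1+x)
    push_cast at this ⊢
    linarith [this]
  have hcast : (∏ l ∈ range (m+1), ((j:ℝ)+1+l)) * (j.factorial : ℝ)
      = ((j+1+m).factorial : ℝ) := by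
    have := nat_prod_range_add m j
    have h2 : ((∏ l ∈ range (m+1), (j+1+l) : ℕ) : ℝ) * (j.factorial : ℝ)
        = ((j+1+m).factorial : ℝ) := by exact_mod_cast congrArg (Nat.cast : ℕ → ℝ) this
    rw [← h2, Nat.cast_prod]
    push_cast
    ring
  rw [eq_div_iff (by positivity)]
  calc (∏ l ∈ range (m+1) \ {j+1}, ((j:ℝ)+1+l)) * (2 * ((j+1).factorial : ℝ))
      = (((j:ℝ)+1+(j+1)) * ∏ l ∈ range (m+1) \ {j+1}, ((j:ℝ)+1+l)) * (j.factorial : ℝ) := by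
        push_cast [Nat.factorial_succ]
        ring
    _ = ((j+1+m).factorial : ℝ) := by rw [← hfull, hcast]

lemma fact_sq_le_s10 (m : ℕ) : ∀ j, j ≤ m →
    m.factorial * m.factorial ≤ (m-j).factorial * (m+j).factorial := by
  intro j
  induction j with
  | zero => simp
  | succ j ih =>
    intro hj
    have h1 := ih (by omega)
    refine le_trans h1 ?_
    have hms : m - j = (m - (j+1)) + 1 := by omega
    rw [hms, Nat.factorial_succ, show m + (j+1) = (m+j)+1 from by omega, Nat.factorial_succ]
    calc (m - (j+1) + 1) * (m-(j+1)).factorial * (m+j).factorial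
        ≤ (m + j + 1) * (m-(j+1)).factorial * (m+j).factorial := by
          have : m - (j+1) + 1 ≤ m + j + 1 := by omega
          exact Nat.mul_le_mul_right _ (Nat.mul_le_mul_right _ this)
      _ = (m-(j+1)).factorial * ((m+j+1) * (m+j).factorial) := by ring

lemma sum_inv_sq (m : ℕ) (hm : 2 ≤ m) :
    ∑ j ∈ Icc 2 m, 4/((j:ℝ)^2-2) ≤ 4 - 4/(m:ℝ) := by
  induction m, hm using Nat.le_induction with
  | base =>
    rw [show Icc 2 2 = {2} from rfl]
    norm_num
  | succ m hm ih =>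
    rw [Finset.sum_Icc_succ_top (by omega)]
    have hx : (2:ℝ) ≤ (m:ℝ) := by exact_mod_cast hm
    have key : 4/(((m:ℝ)+1)^2-2) ≤ 4/(m:ℝ) - 4/((m:ℝ)+1) := by
      rw [div_sub_div _ _ (by linarith) (by linarith)]
      rw [div_le_div_iff₀ (by nlinarith) (by nlinarith)]
      nlinarith
    push_cast
    linarith

lemma prod_sq_pos (m : ℕ) : 0 < ∏ l ∈ Icc 3 m, ((l:ℝ)^2-2) := by
  apply Finset.prod_pos
  intro l hl
  simp only [mem_Icc] at hl
  have : (3:ℝ) ≤ (l:ℝ) := by exact_mod_cast hl.1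
  nlinarith

lemma prod_sq_le (m : ℕ) (hm : 3 ≤ m) :
    ∏ l ∈ Icc 3 m, (l:ℝ)^2 ≤ (4-8/(m:ℝ)) * ∏ l ∈ Icc 3 m, ((l:ℝ)^2-2) := by
  induction m, hm using Nat.le_induction with
  | base =>
    rw [show Icc 3 3 = {3} from rfl]
    norm_num
  | succ m hm ih =>
    rw [Finset.prod_Icc_succ_top (by omega : 3 ≤ m+1),
        Finset.prod_Icc_succ_top (by omega : 3 ≤ m+1)]
    have hx : (3:ℝ) ≤ (m:ℝ) := by exact_mod_cast hm
    have hQ := prod_sq_pos m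
    have hP : 0 ≤ ∏ l ∈ Icc 3 m, (l:ℝ)^2 := by positivity
    have key : (4-8/(m:ℝ)) * ((m:ℝ)+1)^2 ≤ (4-8/((m:ℝ)+1)) * (((m:ℝ)+1)^2-2) := by
      have hm0 : (0:ℝ) < (m:ℝ) := by linarith
      have hm1 : (0:ℝ) < (m:ℝ)+1 := by linarith
      have e1 : 8/(m:ℝ) * (m:ℝ) = 8 := div_mul_cancel₀ 8 (ne_of_gt hm0)
      have e2 : 8/((m:ℝ)+1) * ((m:ℝ)+1) = 8 := div_mul_cancel₀ 8 (ne_of_gt hm1)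
      have ht : 8/(m:ℝ) ≤ 8/3 := by
        rw [div_le_div_iff₀ hm0 (by norm_num)]; linarith
      have hs : 0 < 8/((m:ℝ)+1) := by positivity
      nlinarith [e1, e2, mul_pos hm0 hm1, sq_nonneg ((m:ℝ)+1), mul_le_mul_of_nonneg_left hx (le_of_lt hs)]
    push_cast
    calc (∏ l ∈ Icc 3 m, (l:ℝ)^2) * ((m:ℝ)+1)^2
        ≤ ((4-8/(m:ℝ)) * ∏ l ∈ Icc 3 m, ((l:ℝ)^2-2)) * ((m:ℝ)+1)^2 := by nlinarith
      _ = ((4-8/(m:ℝ)) * ((m:ℝ)+1)^2) * ∏ l ∈ Icc 3 m, ((l:ℝ)^2-2) := by ring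
      _ ≤ ((4-8/((m:ℝ)+1)) * (((m:ℝ)+1)^2-2)) * ∏ l ∈ Icc 3 m, ((l:ℝ)^2-2) := by
          nlinarith
      _ = (4-8/((m:ℝ)+1)) * ((∏ l ∈ Icc 3 m, ((l:ℝ)^2-2)) * (((m:ℝ)+1)^2-2)) := by ring



set_option maxHeartbeats 2000000 in
theorem dual_polynomial_OR_ratio (n : ℕ) (hn : 9 ≤ n) :
    let m := Nat.sqrt n
    let S : Finset ℕ := ((Finset.range (m + 1)).image (fun i => i ^ 2)) ∪ {2}
    let P : ℝ → ℝ := fun x =>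
      2 * (-1 : ℝ) ^ (n - m - 1) * ((Nat.factorial m : ℝ) ^ 2 / Nat.factorial n) *
        ∏ i ∈ Finset.range (n + 1) \ S, (x - i)
    let Q : ℕ → ℝ := fun k => (-1 : ℝ) ^ k * P k
    let OR : ℕ → ℝ := fun k => if k = 0 then 1 else -1
    (∑ k ∈ Finset.range (n + 1), (n.choose k : ℝ) * Q k * OR k = 2 * Q 0) ∧
    (∑ k ∈ Finset.range (n + 1), (n.choose k : ℝ) * Q k * OR k = 2) ∧
    (∑ k ∈ Finset.range (n + 1), (n.choose k : ℝ) * |Q k|) /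
      (∑ k ∈ Finset.range (n + 1), (n.choose k : ℝ) * Q k * OR k) < 14 := by
  intro m S P Q OR
  -- basic numerics
  have hm3 : 3 ≤ m := by
    show 3 ≤ Nat.sqrt n
    exact Nat.le_sqrt.mpr (by omega)
  have hmm : m * m ≤ n := by
    have := Nat.sqrt_le' n
    show Nat.sqrt n * Nat.sqrt n ≤ n
    nlinarith [Nat.sqrt_le' n]
  have hm2n : m + 2 ≤ n := by nlinarith
  have hmn : m ≤ n := by nlinarith
  -- set facts
  have hsq_inj : Function.Injective (fun i : ℕ => i ^ 2) :=
    fun a b h => Nat.pow_left_injective (by norm_num) h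
  have h2notsq : ∀ i : ℕ, i ^ 2 ≠ 2 := by
    intro i h
    rcases Nat.lt_or_ge i 2 with h2 | h2
    · interval_cases i <;> simp_all
    · have : 2^2 ≤ i^2 := Nat.pow_le_pow_left h2 2
      omega
  have h2ni : (2 : ℕ) ∉ (Finset.range (m + 1)).image (fun i => i ^ 2) := by
    simp only [mem_image, mem_range, not_exists]
    intro i
    exact fun h => h2notsq i h.2
  have hdisj2 : Disjoint ((Finset.range (m + 1)).image (fun i => i ^ 2)) ({2} : Finset ℕ) := by
    simp [Finset.disjoint_singleton_right, h2ni]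
  have hScard : S.card = m + 2 := by
    rw [show S = ((Finset.range (m + 1)).image (fun i => i ^ 2)) ∪ {2} from rfl,
      card_union_of_disjoint hdisj2, card_image_of_injective _ hsq_inj]
    simp
  have hSsub : S ⊆ range (n + 1) := by
    intro x hx
    simp only [show S = ((Finset.range (m + 1)).image (fun i => i ^ 2)) ∪ {2} from rfl,
      mem_union, mem_image, mem_range, mem_singleton] at hx
    simp only [mem_range]
    rcases hx with ⟨i, hi, rfl⟩ | rfl
    · have : i * i ≤ m * m := Nat.mul_le_mul (by omega) (by omega)
      have : i ^ 2 ≤ n := by rw [pow_two]; omega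
      omega
    · omega
  have hQdef : ∀ k : ℕ, Q k = (-1:ℝ)^k * P (k:ℝ) := fun k => rfl
  have hORdef0 : OR 0 = 1 := rfl
  have hORdef : ∀ k : ℕ, k ≠ 0 → OR k = -1 := fun k hk => by
    show (if k = 0 then (1:ℝ) else -1) = -1
    rw [if_neg hk]
  have hc0 : ((0:ℕ):ℝ) = 0 := Nat.cast_zero
  set T : Finset ℕ := range (n + 1) \ S with hT
  have hTcard : T.card = n - m - 1 := by
    rw [hT, card_sdiff_of_subset hSsub, hScard, card_range]
    omega
  -- the polynomial
  set p : ℝ[X] := ∏ i ∈ T, (X - C (i:ℝ)) with hp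
  have hpdeg : p.natDegree < n := by
    have : p.natDegree = T.card := by
      rw [hp, natDegree_prod _ _ (fun i _ => X_sub_C_ne_zero _)]
      rw [Finset.sum_congr rfl (fun i (_ : i ∈ T) => natDegree_X_sub_C (i:ℝ)),
        Finset.sum_const, smul_eq_mul, mul_one]
    rw [this, hTcard]; omega
  have hPeval : ∀ k : ℕ, P k = 2 * (-1 : ℝ) ^ (n - m - 1) *
      ((Nat.factorial m : ℝ) ^ 2 / Nat.factorial n) * p.eval (k:ℝ) := by
    intro k
    show (2 * (-1 : ℝ) ^ (n - m - 1) * ((Nat.factorial m : ℝ) ^ 2 / Nat.factorial n) *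
        ∏ i ∈ Finset.range (n + 1) \ S, ((k:ℝ) - i)) = _
    rw [hp, eval_prod]
    simp [eval_sub]
    exact Or.inl rfl
  have hzero : ∑ k ∈ range (n+1), (-1:ℝ)^k * (n.choose k) * P k = 0 := by
    have h := alt_sum_poly_eq_zero n p hpdeg
    calc ∑ k ∈ range (n+1), (-1:ℝ)^k * (n.choose k) * P k
        = 2 * (-1 : ℝ) ^ (n - m - 1) * ((Nat.factorial m : ℝ) ^ 2 / Nat.factorial n) *
          ∑ k ∈ range (n+1), (-1:ℝ)^k * (n.choose k) * p.eval (k:ℝ) := by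
          rw [mul_sum]
          exact sum_congr rfl (fun k _ => by rw [hPeval k]; ring)
      _ = 0 := by rw [h, mul_zero]
  -- part 1
  have part1 : ∑ k ∈ Finset.range (n + 1), (n.choose k : ℝ) * Q k * OR k = 2 * Q 0 := by
    have hsum : ∑ k ∈ range (n+1), ((n.choose k : ℝ) * Q k * OR k
        + (-1:ℝ)^k * (n.choose k) * P k) = 2 * Q 0 := by
      rw [Finset.sum_eq_single 0]
      · rw [hQdef 0, hORdef0]
        simp only [Nat.choose_zero_right, Nat.cast_one, pow_zero]
        ring
      · intro k _ hk
        rw [hQdef k, hORdef k hk]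
        ring
      · intro h
        exact absurd (mem_range.mpr (by omega)) h
    have := Finset.sum_add_distrib (s := range (n+1))
      (f := fun k => (n.choose k : ℝ) * Q k * OR k)
      (g := fun k => (-1:ℝ)^k * (n.choose k) * P k)
    rw [this, hzero, add_zero] at hsum
    exact hsum
  -- Q 0 = 1
  have hfactn_pos : (0:ℝ) < (n.factorial : ℝ) := by exact_mod_cast n.factorial_pos
  have hfactm_pos : (0:ℝ) < (m.factorial : ℝ) := by exact_mod_cast m.factorial_pos
  have h0S : (0:ℕ) ∈ S := by
    simp only [show S = ((Finset.range (m + 1)).image (fun i => i ^ 2)) ∪ {2} from rfl,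
      mem_union, mem_image, mem_range]
    exact Or.inl ⟨0, by omega, by norm_num⟩
  have hsplit0 : range (n+1) \ {0} = T ∪ (S \ {0}) := by
    rw [hT]
    ext x
    simp only [mem_sdiff, mem_union, mem_singleton, mem_range]
    constructor
    · intro ⟨h1, h2⟩
      by_cases hx : x ∈ S
      · exact Or.inr ⟨hx, h2⟩
      · exact Or.inl ⟨h1, hx⟩
    · rintro (⟨h1, h2⟩ | ⟨h1, h2⟩)
      · refine ⟨h1, ?_⟩
        intro h0
        exact h2 (h0 ▸ h0S)
      · exact ⟨mem_range.mp (hSsub h1), h2⟩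
  have hdisjT : Disjoint T (S \ {0}) := by
    rw [hT, Finset.disjoint_left]
    intro x hx hx'
    exact (mem_sdiff.mp hx).2 (mem_sdiff.mp hx').1
  have hprodS0 : ∏ i ∈ S \ {0}, (i:ℝ) = 2 * (m.factorial : ℝ)^2 := by
    have hsetS0 : S \ {0} = ((range (m+1) \ {0}).image (fun i => i^2)) ∪ {2} := by
      ext x
      simp only [show S = ((Finset.range (m + 1)).image (fun i => i ^ 2)) ∪ {2} from rfl,
        mem_sdiff, mem_union, mem_image, mem_range, mem_singleton]
      constructor
      · rintro ⟨h1 | rfl, h2⟩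
        · obtain ⟨i, hi, rfl⟩ := h1
          exact Or.inl ⟨i, ⟨⟨hi, fun h => h2 (by simp [h])⟩, rfl⟩⟩
        · exact Or.inr rfl
      · rintro (⟨i, ⟨⟨hi, hi0⟩, rfl⟩⟩ | rfl)
        · exact ⟨Or.inl ⟨i, hi, rfl⟩, by simpa using hi0⟩
        · exact ⟨Or.inr rfl, by norm_num⟩
    have hd2 : (2:ℕ) ∉ (range (m+1) \ {0}).image (fun i => i^2) := by
      intro h
      exact h2ni (Finset.image_subset_image (Finset.sdiff_subset) h)
    rw [hsetS0, Finset.prod_union (by simp [Finset.disjoint_singleton_right, hd2]),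
      Finset.prod_image (fun a _ b _ h => hsq_inj h), Finset.prod_singleton]
    have : ∀ i ∈ range (m+1) \ {0}, ((i^2:ℕ):ℝ) = ((0:ℝ) + i)^2 := by
      intro i _; push_cast; ring
    rw [Finset.prod_congr rfl this, Finset.prod_pow, prod_add_erase0 m]
    norm_num
    ring
  have hprodT : (∏ i ∈ T, (i:ℝ)) * (2 * (m.factorial : ℝ)^2) = (n.factorial : ℝ) := by
    have h1 : ∏ i ∈ range (n+1) \ {0}, (i:ℝ) = (n.factorial : ℝ) := by
      have hset : range (n+1) \ {0} = Ico 1 (n+1) := by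
        ext x; simp only [mem_sdiff, mem_range, mem_singleton, mem_Ico]; omega
      rw [hset, ← Nat.cast_prod]
      norm_cast
      exact Finset.prod_Ico_id_eq_factorial n
    rw [← hprodS0, ← Finset.prod_union hdisjT, ← hsplit0, h1]
  have hQ0 : Q 0 = 1 := by
    rw [hQdef 0, pow_zero, one_mul, hPeval 0]
    have hev : p.eval ((0:ℕ):ℝ) = (-1:ℝ)^(n-m-1) * ∏ i ∈ T, (i:ℝ) := by
      rw [hp, eval_prod]
      simp only [eval_sub, eval_X, eval_C, hc0, zero_sub]
      have : (∏ i ∈ T, -(i:ℝ)) = ∏ i ∈ T, ((-1) * (i:ℝ)) := by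
        exact Finset.prod_congr rfl (fun i _ => by ring)
      rw [this, Finset.prod_mul_distrib, Finset.prod_const, hTcard]
    rw [hev]
    have hne : (2 * (m.factorial : ℝ)^2) ≠ 0 := by positivity
    have hprodT' : (∏ i ∈ T, (i:ℝ)) = (n.factorial : ℝ) / (2 * (m.factorial : ℝ)^2) := by
      rw [eq_div_iff hne]; exact hprodT
    rw [hprodT']
    have hs : ((-1:ℝ)^(n-m-1)) * ((-1:ℝ)^(n-m-1)) = 1 := by
      rw [← pow_add, ← two_mul, pow_mul]; norm_num
    have hs2 : ((-1:ℝ))^((n-m-1)*2) = 1 := by rw [mul_comm, pow_mul]; norm_num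
    have hd : (-1:ℝ) ^ (n - m - 1) = 1 ∨ (-1:ℝ) ^ (n - m - 1) = -1 := by
      rcases Nat.even_or_odd (n-m-1) with h|h
      · exact Or.inl (Even.neg_one_pow h)
      · exact Or.inr (Odd.neg_one_pow h)
    field_simp
    ring_nf
    all_goals simp only [hs2]
    all_goals first | exact hd | ring
  have part2 : ∑ k ∈ Finset.range (n + 1), (n.choose k : ℝ) * Q k * OR k = 2 := by
    rw [part1, hQ0]; norm_num
  -- numerator
  have hQabs : ∀ k : ℕ, |Q k| = |P (k:ℝ)| := by
    intro k
    rw [hQdef k, abs_mul, abs_pow, abs_neg, abs_one, one_pow, one_mul]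
  have hPzeroT : ∀ k ∈ T, P (k:ℝ) = 0 := by
    intro k hk
    show 2 * (-1 : ℝ) ^ (n - m - 1) * ((Nat.factorial m : ℝ) ^ 2 / Nat.factorial n) *
        ∏ i ∈ Finset.range (n + 1) \ S, ((k:ℝ) - i) = 0
    rw [Finset.prod_eq_zero (hT ▸ hk : k ∈ Finset.range (n + 1) \ S) (by ring), mul_zero]
  have hNum : ∑ k ∈ range (n + 1), (n.choose k : ℝ) * |Q k|
      = ∑ k ∈ S, (n.choose k : ℝ) * |Q k| := by
    rw [eq_comm]
    apply Finset.sum_subset hSsub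
    intro x hx hxS
    rw [hQabs x, hPzeroT x (by rw [hT, mem_sdiff]; exact ⟨hx, hxS⟩), abs_zero, mul_zero]
  set D : ℕ → ℝ := fun k => ∏ i ∈ S \ {k}, |(k:ℝ) - i| with hDdef
  have hDpos : ∀ k : ℕ, 0 < D k := by
    intro k
    apply Finset.prod_pos
    intro i hi
    rw [abs_pos, sub_ne_zero]
    have : i ≠ k := fun h => by simp [h] at hi
    exact_mod_cast fun h => this (Nat.cast_injective h).symm
  have hsplitk : ∀ k ∈ S, range (n+1) \ {k} = T ∪ (S \ {k}) := by
    intro k hk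
    rw [hT]
    ext x
    simp only [mem_sdiff, mem_union, mem_singleton, mem_range]
    constructor
    · intro ⟨h1, h2⟩
      by_cases hx : x ∈ S
      · exact Or.inr ⟨hx, h2⟩
      · exact Or.inl ⟨h1, hx⟩
    · rintro (⟨h1, h2⟩ | ⟨h1, h2⟩)
      · exact ⟨h1, fun h0 => h2 (h0 ▸ hk)⟩
      · exact ⟨mem_range.mp (hSsub h1), h2⟩
  have hdisjTk : ∀ k : ℕ, Disjoint T (S \ {k}) := by
    intro k
    rw [hT, Finset.disjoint_left]
    intro x hx hx'
    exact (mem_sdiff.mp hx).2 (mem_sdiff.mp hx').1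
  have hterm : ∀ k ∈ S, (n.choose k : ℝ) * |Q k| * D k = 2 * (m.factorial : ℝ)^2 := by
    intro k hk
    have hkn : k ≤ n := by have := mem_range.mp (hSsub hk); omega
    have habsP : |P (k:ℝ)| = 2 * ((m.factorial : ℝ)^2 / n.factorial)
        * ∏ i ∈ T, |(k:ℝ) - i| := by
      show |2 * (-1 : ℝ) ^ (n - m - 1) * ((Nat.factorial m : ℝ) ^ 2 / Nat.factorial n) *
        ∏ i ∈ Finset.range (n + 1) \ S, ((k:ℝ) - i)| = _
      rw [abs_mul, abs_mul, abs_mul, abs_pow, abs_neg, abs_one, one_pow, mul_one,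
        Finset.abs_prod]
      rw [abs_of_pos (by positivity : (0:ℝ) < (Nat.factorial m : ℝ)^2 / Nat.factorial n)]
      norm_num
      exact Or.inl rfl
    have hprodfull : (∏ i ∈ T, |(k:ℝ) - i|) * D k
        = (k.factorial : ℝ) * (n-k).factorial := by
      rw [hDdef, ← Finset.prod_union (hdisjTk k), ← hsplitk k hk]
      exact prod_abs_sub n k hkn
    have hchoose : (n.choose k : ℝ) * ((k.factorial : ℝ) * (n-k).factorial)
        = (n.factorial : ℝ) := by
      rw [← mul_assoc]
      exact_mod_cast congrArg (Nat.cast : ℕ → ℝ)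
        (Nat.choose_mul_factorial_mul_factorial hkn)
    calc (n.choose k : ℝ) * |Q k| * D k
        = (n.choose k : ℝ) * (2 * ((m.factorial : ℝ)^2 / n.factorial))
          * ((∏ i ∈ T, |(k:ℝ) - i|) * D k) := by rw [hQabs k, habsP]; ring
      _ = (2 * ((m.factorial : ℝ)^2 / n.factorial))
          * ((n.choose k : ℝ) * ((k.factorial : ℝ) * (n-k).factorial)) := by
          rw [hprodfull]; ring
      _ = 2 * (m.factorial : ℝ)^2 := by
          rw [hchoose]; field_simp
  have htermdiv : ∀ k ∈ S, (n.choose k : ℝ) * |Q k| = 2 * (m.factorial : ℝ)^2 / D k := by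
    intro k hk
    rw [eq_div_iff (hDpos k).ne']
    exact hterm k hk
  have hsum_split : ∑ k ∈ S, (n.choose k : ℝ) * |Q k|
      = (∑ j ∈ range (m+1), 2 * (m.factorial : ℝ)^2 / D (j^2))
        + 2 * (m.factorial : ℝ)^2 / D 2 := by
    rw [Finset.sum_congr rfl htermdiv]
    rw [show S = ((Finset.range (m + 1)).image (fun i => i ^ 2)) ∪ {2} from rfl,
      Finset.sum_union hdisj2, Finset.sum_image (fun a _ b _ h => hsq_inj h),
      Finset.sum_singleton]
  -- D at squares
  have hSdiffsq : ∀ j, j ≤ m → S \ {j^2} = ((range (m+1) \ {j}).image (fun i => i^2)) ∪ {2} := by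
    intro j hj
    ext x
    simp only [show S = ((Finset.range (m + 1)).image (fun i => i ^ 2)) ∪ {2} from rfl,
      mem_sdiff, mem_union, mem_image, mem_range, mem_singleton]
    constructor
    · rintro ⟨h1 | rfl, h2⟩
      · obtain ⟨i, hi, rfl⟩ := h1
        exact Or.inl ⟨i, ⟨⟨hi, fun h => h2 (by rw [h])⟩, rfl⟩⟩
      · exact Or.inr rfl
    · rintro (⟨i, ⟨⟨hi, hij⟩, rfl⟩⟩ | rfl)
      · exact ⟨Or.inl ⟨i, hi, rfl⟩, fun h => hij (hsq_inj h)⟩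
      · exact ⟨Or.inr rfl, fun h => h2notsq j h.symm⟩
  have hd2img : ∀ j : ℕ, (2:ℕ) ∉ (range (m+1) \ {j}).image (fun i => i^2) := by
    intro j h
    exact h2ni (Finset.image_subset_image (Finset.sdiff_subset) h)
  have hDsq : ∀ j, j ≤ m → D (j^2)
      = ((j.factorial : ℝ) * (m-j).factorial)
        * (∏ l ∈ range (m+1) \ {j}, ((j:ℝ)+l)) * |((j:ℝ)^2 - 2)| := by
    intro j hj
    rw [hDdef]
    show ∏ i ∈ S \ {j^2}, |((j^2:ℕ):ℝ) - i| = _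
    rw [hSdiffsq j hj,
      Finset.prod_union (by simp [Finset.disjoint_singleton_right, hd2img j]),
      Finset.prod_image (fun a _ b _ h => hsq_inj h), Finset.prod_singleton]
    have hcongr : ∀ l ∈ range (m+1) \ {j},
        |((j^2:ℕ):ℝ) - ((l^2:ℕ):ℝ)| = |(j:ℝ) - l| * ((j:ℝ)+l) := by
      intro l hl
      have h1 : ((j^2:ℕ):ℝ) - ((l^2:ℕ):ℝ) = ((j:ℝ) - l) * ((j:ℝ) + l) := by
        push_cast; ring
      rw [h1, abs_mul, abs_of_nonneg (by positivity : (0:ℝ) ≤ (j:ℝ) + l)]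
    rw [Finset.prod_congr rfl hcongr, Finset.prod_mul_distrib, prod_abs_sub m j hj]
    have : |((j^2:ℕ):ℝ) - ((2:ℕ):ℝ)| = |((j:ℝ)^2 - 2)| := by push_cast; norm_num
    rw [this]
  have hD0 : D (0^2) = 2 * (m.factorial : ℝ)^2 := by
    rw [hDsq 0 (by omega)]
    rw [show ∏ l ∈ range (m+1) \ {0}, (((0:ℕ):ℝ)+(l:ℝ)) = (m.factorial : ℝ) from by
      rw [← prod_add_erase0 m]
      exact Finset.prod_congr rfl (fun l _ => by norm_num)]
    rw [show |(((0:ℕ)):ℝ)^2 - 2| = 2 from by norm_num]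
    simp [Nat.factorial_zero]
    ring
  have habs_pos : ∀ j : ℕ, 1 ≤ j → (0:ℝ) < |(j:ℝ)^2 - 2| := by
    intro j hj
    rw [abs_pos, sub_ne_zero]
    intro h
    have : (j^2 : ℕ) = (2:ℕ) := by exact_mod_cast (by push_cast; linarith [h] : ((j^2:ℕ):ℝ) = ((2:ℕ):ℝ))
    exact h2notsq j this
  have htermj : ∀ j, 1 ≤ j → j ≤ m →
      2 * (m.factorial : ℝ)^2 / D (j^2) ≤ 4 / |(j:ℝ)^2 - 2| := by
    intro j hj1 hjm
    obtain ⟨j', rfl⟩ : ∃ j', j = j' + 1 := ⟨j - 1, by omega⟩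
    have hBval : ∏ l ∈ range (m+1) \ {j'+1}, (((j'+1:ℕ):ℝ)+(l:ℝ))
        = ((j'+1+m).factorial : ℝ) / (2 * (j'+1).factorial) := by
      rw [← prod_add_erase m j' hjm]
      exact Finset.prod_congr rfl (fun l _ => by push_cast; ring)
    have hF1pos : (0:ℝ) < ((j'+1).factorial : ℝ) := by
      exact_mod_cast (j'+1).factorial_pos
    have hDval : D ((j'+1)^2)
        = ((m-(j'+1)).factorial : ℝ) * ((j'+1+m).factorial : ℝ)
          * |((j'+1:ℕ):ℝ)^2 - 2| / 2 := by
      rw [hDsq (j'+1) hjm, hBval]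
      field_simp
    have hA0 : (0:ℝ) < |((j'+1:ℕ):ℝ)^2 - 2| := habs_pos (j'+1) (by omega)
    rw [div_le_div_iff₀ (hDpos _) hA0, hDval]
    have hfact : (m.factorial:ℝ) * m.factorial
        ≤ ((m-(j'+1)).factorial : ℝ) * ((j'+1+m).factorial : ℝ) := by
      have := fact_sq_le_s10 m (j'+1) hjm
      rw [show j'+1+m = m+(j'+1) from by omega]
      exact_mod_cast this
    have h2 : (m.factorial:ℝ)^2 * |((j'+1:ℕ):ℝ)^2 - 2|
        ≤ ((m-(j'+1)).factorial : ℝ) * ((j'+1+m).factorial : ℝ) * |((j'+1:ℕ):ℝ)^2 - 2| := by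
      rw [pow_two]
      exact mul_le_mul_of_nonneg_right hfact (le_of_lt hA0)
    linarith [h2]
  have hsum_sq : ∑ j ∈ range (m+1), 2 * (m.factorial : ℝ)^2 / D (j^2) ≤ 9 := by
    have hr : range (m+1) = insert 0 (Icc 1 m) := by
      ext x; simp only [mem_range, mem_insert, mem_Icc]; omega
    rw [hr, Finset.sum_insert (by simp)]
    have h0 : 2 * (m.factorial : ℝ)^2 / D (0^2) = 1 := by
      rw [hD0, div_self (by positivity)]
    rw [h0]
    have h1 : ∑ j ∈ Icc 1 m, 2 * (m.factorial : ℝ)^2 / D (j^2)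
        ≤ ∑ j ∈ Icc 1 m, 4 / |(j:ℝ)^2 - 2| := by
      apply Finset.sum_le_sum
      intro j hj
      rw [mem_Icc] at hj
      exact htermj j hj.1 hj.2
    have hic : Icc 1 m = insert 1 (Icc 2 m) := by
      ext x; simp only [mem_Icc, mem_insert]; omega
    have h2 : ∑ j ∈ Icc 1 m, 4 / |(j:ℝ)^2 - 2| ≤ 8 := by
      rw [hic, Finset.sum_insert (by simp)]
      have ha : 4 / |((1:ℕ):ℝ)^2 - 2| = 4 := by norm_num
      have hb : ∑ j ∈ Icc 2 m, 4 / |(j:ℝ)^2 - 2| = ∑ j ∈ Icc 2 m, 4 / ((j:ℝ)^2 - 2) := by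
        apply Finset.sum_congr rfl
        intro j hj
        rw [mem_Icc] at hj
        have : (2:ℝ) ≤ (j:ℝ) := by exact_mod_cast hj.1
        rw [abs_of_nonneg (by nlinarith)]
      rw [ha, hb]
      have hc := sum_inv_sq m (by omega)
      have hd : (0:ℝ) < 4/(m:ℝ) := by positivity
      linarith
    linarith
  -- the k = 2 term
  have hSd2 : S \ {2} = (range (m+1)).image (fun i => i^2) := by
    ext x
    simp only [show S = ((Finset.range (m + 1)).image (fun i => i ^ 2)) ∪ {2} from rfl,
      mem_sdiff, mem_union, mem_image, mem_range, mem_singleton]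
    constructor
    · rintro ⟨h1 | rfl, h2⟩
      · exact h1
      · exact absurd rfl h2
    · rintro ⟨i, hi, rfl⟩
      exact ⟨Or.inl ⟨i, hi, rfl⟩, fun h => h2notsq i h⟩
  have hRpos : (0:ℝ) < ∏ l ∈ Icc 3 m, ((l:ℝ)^2 - 2) := prod_sq_pos m
  have hD2 : D 2 = 4 * ∏ l ∈ Icc 3 m, ((l:ℝ)^2 - 2) := by
    rw [hDdef]
    show ∏ i ∈ S \ {2}, |((2:ℕ):ℝ) - i| = _
    rw [hSd2, Finset.prod_image (fun a _ b _ h => hsq_inj h)]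
    have hr3 : range (m+1) = range 3 ∪ Icc 3 m := by
      ext x; simp only [mem_range, mem_union, mem_Icc]; omega
    have hdisj3 : Disjoint (range 3) (Icc 3 m) := by
      rw [Finset.disjoint_left]
      intro x hx hx'
      rw [mem_range] at hx; rw [mem_Icc] at hx'; omega
    rw [hr3, Finset.prod_union hdisj3]
    have hp3 : ∏ l ∈ range 3, |((2:ℕ):ℝ) - ((l^2:ℕ):ℝ)| = 4 := by
      rw [Finset.prod_range_succ, Finset.prod_range_succ, Finset.prod_range_one]
      norm_num
    have hp4 : ∏ l ∈ Icc 3 m, |((2:ℕ):ℝ) - ((l^2:ℕ):ℝ)| = ∏ l ∈ Icc 3 m, ((l:ℝ)^2 - 2) := by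
      apply Finset.prod_congr rfl
      intro l hl
      rw [mem_Icc] at hl
      have h3l : (3:ℝ) ≤ (l:ℝ) := by exact_mod_cast hl.1
      have : ((2:ℕ):ℝ) - ((l^2:ℕ):ℝ) = -((l:ℝ)^2 - 2) := by push_cast; ring
      rw [this, abs_neg, abs_of_nonneg (by nlinarith)]
    rw [hp3, hp4]
  have hmfact_sq : (m.factorial:ℝ)^2 = 4 * ∏ l ∈ Icc 3 m, (l:ℝ)^2 := by
    have hmf : (m.factorial:ℝ) = ∏ l ∈ Icc 1 m, (l:ℝ) := by
      have hio : Icc 1 m = Ico 1 (m+1) := by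
        ext x; simp only [mem_Icc, mem_Ico]; omega
      rw [hio, ← Nat.cast_prod]
      exact_mod_cast congrArg (Nat.cast : ℕ → ℝ) (Finset.prod_Ico_id_eq_factorial m).symm
    have hi12 : Icc 1 m = insert 1 (insert 2 (Icc 3 m)) := by
      ext x; simp only [mem_Icc, mem_insert]; omega
    rw [hmf, hi12, Finset.prod_insert (by simp), Finset.prod_insert (by simp),
      Finset.prod_pow]
    push_cast
    ring
  have hterm2 : 2 * (m.factorial : ℝ)^2 / D 2 ≤ 8 := by
    rw [hD2, hmfact_sq, div_le_iff₀ (by positivity)]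
    have hkey := prod_sq_le m hm3
    have h8m : (0:ℝ) < 8/(m:ℝ) := by positivity
    have : (4 - 8/(m:ℝ)) * (∏ l ∈ Icc 3 m, ((l:ℝ)^2-2)) ≤ 4 * ∏ l ∈ Icc 3 m, ((l:ℝ)^2-2) := by
      apply mul_le_mul_of_nonneg_right (by linarith) (le_of_lt hRpos)
    nlinarith [hkey, hRpos]
  refine ⟨part1, part2, ?_⟩
  rw [part2]
  have hle : ∑ k ∈ range (n + 1), (n.choose k : ℝ) * |Q k| ≤ 17 := by
    rw [hNum, hsum_split]
    linarith [hsum_sq, hterm2]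
  rw [div_lt_iff₀ (by norm_num : (0:ℝ) < 2)]
  linarith
end

section
/- Let n ≥ 9, m = ⌊√n⌋, S = {i² : 0 ≤ i ≤ m} ∪ {2}, and P(x) = 2·(−1)^{n−m−1}·(m!²/n!)·∏_{i ∈ [n]∖S} (x − i). Define Q(k) = (−1)^k P(k). Then the unique symmetric multilinear polynomial q on {±1}ⁿ with q(x) = Q(|x|) (where |x| is the number of −1s in x) has pure high degree at least m + 1 > √n; i.e., q̂(S) = 0 for all |S| ≤ m. -/
/-- ±1 value of a Boolean coordinate: `false ↦ 1`, `true ↦ -1`. -/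
noncomputable def sgnR (b : Bool) : ℝ := if b then -1 else 1

/-- Fourier character χ_S on the Boolean cube. -/
noncomputable def chiR {n : ℕ} (S : Finset (Fin n)) (x : Fin n → Bool) : ℝ :=
  ∏ i ∈ S, sgnR (x i)

/-- Fourier coefficient of a function on the Boolean cube. -/
noncomputable def cubeCoeff {n : ℕ} (f : (Fin n → Bool) → ℝ) (S : Finset (Fin n)) : ℝ :=
  (∑ x : Fin n → Bool, f x * chiR S x) / 2 ^ n

lemma sgnR_sq (b : Bool) : sgnR b * sgnR b = 1 := by cases b <;> simp [sgnR]

lemma chiR_mul_self {n} (S : Finset (Fin n)) (x : Fin n → Bool) :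
    chiR S x * chiR S x = 1 := by
  simp [chiR, ← Finset.prod_mul_distrib, sgnR_sq]

lemma cubeCoeff_smul {n} (c : ℝ) (f : (Fin n → Bool) → ℝ) (S : Finset (Fin n)) :
    cubeCoeff (fun x => c * f x) S = c * cubeCoeff f S := by
  simp only [cubeCoeff, mul_assoc, ← Finset.mul_sum, mul_div_assoc]

lemma cubeCoeff_sub {n} (f g : (Fin n → Bool) → ℝ) (S : Finset (Fin n)) :
    cubeCoeff (fun x => f x - g x) S = cubeCoeff f S - cubeCoeff g S := by
  simp [cubeCoeff, sub_mul, Finset.sum_sub_distrib, sub_div]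

lemma cubeCoeff_sum {n} {ι : Type*} (s : Finset ι) (f : ι → (Fin n → Bool) → ℝ)
    (S : Finset (Fin n)) :
    cubeCoeff (fun x => ∑ i ∈ s, f i x) S = ∑ i ∈ s, cubeCoeff (f i) S := by
  simp only [cubeCoeff, ← Finset.sum_div]
  congr 1
  rw [← Finset.sum_comm]
  exact Finset.sum_congr rfl fun x _ => Finset.sum_mul _ _ _

lemma chiR_update_flip {n} (U : Finset (Fin n)) (i : Fin n) (hi : i ∈ U)
    (x : Fin n → Bool) : chiR U (Function.update x i (!x i)) = - chiR U x := by
  rw [chiR, chiR, ← Finset.prod_erase_mul _ _ hi, ← Finset.prod_erase_mul _ _ hi]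
  have h1 : ∀ j ∈ U.erase i, sgnR (Function.update x i (!x i) j) = sgnR (x j) := by
    intro j hj
    rw [Function.update_of_ne (Finset.ne_of_mem_erase hj)]
  rw [Finset.prod_congr rfl h1, Function.update_self]
  cases x i <;> simp [sgnR]

lemma sum_chiR_eq_zero {n} {U : Finset (Fin n)} (hU : U.Nonempty) :
    ∑ x : Fin n → Bool, chiR U x = 0 := by
  obtain ⟨i, hi⟩ := hU
  have hinv : Function.Involutive (fun x : Fin n → Bool => Function.update x i (!x i)) := by
    intro x
    funext j
    by_cases h : j = i
    · subst h; simp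
    · simp [Function.update_of_ne h]
  have := Equiv.sum_comp (Function.Involutive.toPerm _ hinv) (chiR U)
  have h2 : ∀ x : Fin n → Bool, chiR U ((Function.Involutive.toPerm _ hinv) x) = - chiR U x := by
    intro x
    exact chiR_update_flip U i hi x
  rw [Finset.sum_congr rfl (fun x _ => h2 x)] at this
  simp at this
  linarith [this]

lemma cubeCoeff_const {n} (c : ℝ) {U : Finset (Fin n)} (hU : U.Nonempty) :
    cubeCoeff (fun _ => c) U = 0 := by
  simp [cubeCoeff, ← Finset.mul_sum, sum_chiR_eq_zero hU]

lemma sgnR_mul_chiR {n} (i : Fin n) (U : Finset (Fin n)) (x : Fin n → Bool) :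
    sgnR (x i) * chiR U x = chiR (symmDiff U {i}) x := by
  by_cases hi : i ∈ U
  · have : symmDiff U {i} = U.erase i := by
      ext j
      simp only [Finset.mem_symmDiff, Finset.mem_singleton, Finset.mem_erase]
      constructor
      · rintro (⟨h1, h2⟩ | ⟨h1, h2⟩) <;> [exact ⟨h2, h1⟩; exact absurd (h1 ▸ hi) h2]
      · rintro ⟨h1, h2⟩; exact Or.inl ⟨h2, h1⟩
    rw [this, chiR, chiR, ← Finset.prod_erase_mul _ _ hi, ← mul_assoc, mul_comm (sgnR (x i)),
      mul_assoc, sgnR_sq, mul_one]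
  · have : symmDiff U {i} = insert i U := by
      ext j
      simp only [Finset.mem_symmDiff, Finset.mem_singleton, Finset.mem_insert]
      constructor
      · rintro (⟨h1, h2⟩ | ⟨h1, h2⟩) <;> [exact Or.inr h1; exact Or.inl h1]
      · rintro (h1 | h1)
        · exact Or.inr ⟨h1, h1 ▸ hi⟩
        · exact Or.inl ⟨h1, fun h => hi (h ▸ h1)⟩
    rw [this, chiR, chiR, Finset.prod_insert hi]

lemma cubeCoeff_sgnR_mul {n} (i : Fin n) (f : (Fin n → Bool) → ℝ) (U : Finset (Fin n)) :
    cubeCoeff (fun x => sgnR (x i) * f x) U = cubeCoeff f (symmDiff U {i}) := by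
  unfold cubeCoeff
  congr 1
  exact Finset.sum_congr rfl fun x _ => by
    rw [← sgnR_mul_chiR]; ring

lemma count_eq {n} (x : Fin n → Bool) :
    ((Finset.univ.filter (fun i => x i = true)).card : ℝ)
      = ∑ i : Fin n, (1 - sgnR (x i)) / 2 := by
  rw [Finset.card_filter]
  push_cast
  refine Finset.sum_congr rfl fun i _ => ?_
  cases x i <;> simp [sgnR]

lemma card_symmDiff_singleton {n} (U : Finset (Fin n)) (i : Fin n) :
    U.card - 1 ≤ (symmDiff U {i}).card := by
  by_cases hi : i ∈ U
  · have : symmDiff U {i} = U.erase i := by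
      ext j
      simp only [Finset.mem_symmDiff, Finset.mem_singleton, Finset.mem_erase]
      constructor
      · rintro (⟨h1, h2⟩ | ⟨h1, h2⟩) <;> [exact ⟨h2, h1⟩; exact absurd (h1 ▸ hi) h2]
      · rintro ⟨h1, h2⟩; exact Or.inl ⟨h2, h1⟩
    rw [this, Finset.card_erase_of_mem hi]
  · have : symmDiff U {i} = insert i U := by
      ext j
      simp only [Finset.mem_symmDiff, Finset.mem_singleton, Finset.mem_insert]
      constructor
      · rintro (⟨h1, h2⟩ | ⟨h1, h2⟩) <;> [exact Or.inr h1; exact Or.inl h1]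
      · rintro (h1 | h1)
        · exact Or.inr ⟨h1, h1 ▸ hi⟩
        · exact Or.inl ⟨h1, fun h => hi (h ▸ h1)⟩
    rw [this, Finset.card_insert_of_notMem hi]
    omega

lemma coeff_prod_zero {n : ℕ} (F : Finset ℕ) :
    ∀ U : Finset (Fin n), F.card < U.card →
      cubeCoeff (fun x =>
        ∏ j ∈ F, (((Finset.univ.filter (fun i => x i = true)).card : ℝ) - (j : ℝ))) U = 0 := by
  classical
  induction F using Finset.induction_on with
  | empty =>
      intro U hU
      simp only [Finset.prod_empty]
      exact cubeCoeff_const 1 (Finset.card_pos.mp (by simpa using hU))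
  | @insert j F hj ih =>
      intro U hU
      rw [Finset.card_insert_of_notMem hj] at hU
      have hg : cubeCoeff (fun x =>
          ∏ j ∈ F, (((Finset.univ.filter (fun i => x i = true)).card : ℝ) - (j : ℝ))) U = 0 :=
        ih U (by omega)
      have key : ∀ x : Fin n → Bool,
          (∏ j' ∈ insert j F, (((Finset.univ.filter (fun i => x i = true)).card : ℝ) - (j' : ℝ)))
          = (∑ i : Fin n, ((1 : ℝ)/2 *
              (∏ j' ∈ F, (((Finset.univ.filter (fun i => x i = true)).card : ℝ) - (j' : ℝ)))
             - (1:ℝ)/2 * (sgnR (x i) *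
              (∏ j' ∈ F, (((Finset.univ.filter (fun i => x i = true)).card : ℝ) - (j' : ℝ))))))
            - (j : ℝ) *
              (∏ j' ∈ F, (((Finset.univ.filter (fun i => x i = true)).card : ℝ) - (j' : ℝ))) := by
        intro x
        rw [Finset.prod_insert hj, count_eq x, sub_mul, Finset.sum_mul]
        congr 1
        exact Finset.sum_congr rfl fun i _ => by ring
      rw [funext key, cubeCoeff_sub, cubeCoeff_sum, cubeCoeff_smul, hg, mul_zero, sub_zero]
      refine Finset.sum_eq_zero fun i _ => ?_
      rw [cubeCoeff_sub]
      have h1 : cubeCoeff (fun x => (1:ℝ)/2 *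
          ∏ j' ∈ F, (((Finset.univ.filter (fun i => x i = true)).card : ℝ) - (j' : ℝ))) U = 0 := by
        rw [cubeCoeff_smul, hg, mul_zero]
      have h2 : cubeCoeff (fun x => (1:ℝ)/2 * (sgnR (x i) *
          ∏ j' ∈ F, (((Finset.univ.filter (fun i => x i = true)).card : ℝ) - (j' : ℝ)))) U = 0 := by
        rw [cubeCoeff_smul, cubeCoeff_sgnR_mul]
        rw [ih _ (by have := card_symmDiff_singleton U i; omega), mul_zero]
      rw [h1, h2, sub_zero]

lemma neg_one_pow_count {n} (x : Fin n → Bool) :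
    (-1 : ℝ) ^ (Finset.univ.filter (fun i => x i = true)).card = chiR Finset.univ x := by
  rw [chiR, ← Finset.prod_filter_mul_prod_filter_not Finset.univ (fun i => x i = true)]
  have h1 : ∏ i ∈ Finset.univ.filter (fun i => x i = true), sgnR (x i)
      = (-1 : ℝ) ^ (Finset.univ.filter (fun i => x i = true)).card := by
    rw [← Finset.prod_const]
    refine Finset.prod_congr rfl fun i hi => ?_
    simp only [Finset.mem_filter] at hi
    simp [sgnR, hi.2]
  have h2 : ∏ i ∈ Finset.univ.filter (fun i => ¬ x i = true), sgnR (x i) = 1 := by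
    refine Finset.prod_eq_one fun i hi => ?_
    simp only [Finset.mem_filter] at hi
    have hx : x i = false := by simpa using hi.2
    simp [sgnR, hx]
  rw [h1, h2, mul_one]

lemma cubeCoeff_chiUniv_mul {n} (f : (Fin n → Bool) → ℝ) (T : Finset (Fin n)) :
    cubeCoeff (fun x => chiR Finset.univ x * f x) T
      = cubeCoeff f (Finset.univ \ T) := by
  unfold cubeCoeff
  congr 1
  refine Finset.sum_congr rfl fun x _ => ?_
  have h : chiR (Finset.univ \ T) x * chiR T x = chiR Finset.univ x := by
    rw [chiR, chiR, chiR, Finset.prod_sdiff (Finset.subset_univ T)]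
  calc chiR Finset.univ x * f x * chiR T x
      = f x * (chiR Finset.univ x * chiR T x) := by ring
    _ = f x * ((chiR (Finset.univ \ T) x * chiR T x) * chiR T x) := by rw [h]
    _ = f x * (chiR (Finset.univ \ T) x * (chiR T x * chiR T x)) := by ring
    _ = f x * chiR (Finset.univ \ T) x := by rw [chiR_mul_self, mul_one]

theorem dual_polynomial_pure_high_degree (n : ℕ) (hn : 9 ≤ n) :
    let m := Nat.sqrt n
    let S : Finset ℕ := ((Finset.range (m + 1)).image (fun i => i ^ 2)) ∪ {2}
    let P : ℝ → ℝ := fun x =>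
      2 * (-1 : ℝ) ^ (n - m - 1) * ((Nat.factorial m : ℝ) ^ 2 / Nat.factorial n) *
        ∏ i ∈ Finset.range (n + 1) \ S, (x - i)
    let Q : ℕ → ℝ := fun k => (-1 : ℝ) ^ k * P k
    let q : (Fin n → Bool) → ℝ := fun x => Q (Finset.univ.filter (fun i => x i = true)).card
    (∀ T : Finset (Fin n), T.card ≤ m → cubeCoeff q T = 0) ∧ (m : ℝ) + 1 > Real.sqrt n := by
  intro m S P Q q
  have hm3 : 3 ≤ m := by
    have := Nat.sqrt_le_sqrt hn
    simpa [show Nat.sqrt 9 = 3 by norm_num] using this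
  have hmn : m * m ≤ n := by nlinarith [Nat.sqrt_le' n]
  have hm2n : m + 2 ≤ n := by nlinarith
  constructor
  · intro T hT
    set F : Finset ℕ := Finset.range (n + 1) \ S with hF
    -- cardinality of S
    have hsub : S ⊆ Finset.range (n + 1) := by
      intro a ha
      simp only [S, Finset.mem_union, Finset.mem_image, Finset.mem_range,
        Finset.mem_singleton] at ha
      rcases ha with ⟨i, hi, rfl⟩ | rfl
      · have : i ≤ m := by omega
        have : i ^ 2 ≤ m * m := by nlinarith
        simp only [Finset.mem_range]; omega
      · simp only [Finset.mem_range]; omega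
    have hScard : S.card = m + 2 := by
      have hinj : Function.Injective (fun i : ℕ => i ^ 2) :=
        fun a b h => Nat.pow_left_injective (by norm_num) h
      have h2 : (2 : ℕ) ∉ (Finset.range (m + 1)).image (fun i => i ^ 2) := by
        simp only [Finset.mem_image, Finset.mem_range, not_exists]
        rintro i ⟨hi, h⟩
        rcases i with _ | _ | i <;> simp_all <;> nlinarith
      rw [show S = _ from rfl, Finset.card_union_of_disjoint (by
          simpa [Finset.disjoint_singleton_right] using h2),
        Finset.card_image_of_injective _ hinj, Finset.card_range, Finset.card_singleton]
    have hFcard : F.card = n - m - 1 := by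
      rw [hF, Finset.card_sdiff_of_subset hsub, Finset.card_range, hScard]
      omega
    have hUcard : F.card < (Finset.univ \ T).card := by
      rw [Finset.card_sdiff_of_subset (Finset.subset_univ T), Finset.card_univ, Fintype.card_fin, hFcard]
      omega
    have hq : q = fun x =>
        (2 * (-1 : ℝ) ^ (n - m - 1) * ((Nat.factorial m : ℝ) ^ 2 / Nat.factorial n)) *
          (chiR Finset.univ x *
            ∏ j ∈ F, (((Finset.univ.filter (fun i => x i = true)).card : ℝ) - (j : ℝ))) := by
      funext x
      show Q _ = _
      simp only [Q, P]
      rw [neg_one_pow_count]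
      ring
    rw [hq, cubeCoeff_smul, cubeCoeff_chiUniv_mul, coeff_prod_zero F _ hUcard, mul_zero]
  · have h1 : (n : ℝ) < ((m : ℝ) + 1) ^ 2 := by
      have hnat : n < (m + 1) * (m + 1) := Nat.lt_succ_sqrt n
      have hc : (n : ℝ) < ((m : ℝ) + 1) * ((m : ℝ) + 1) := by exact_mod_cast hnat
      nlinarith
    have h2 : (0 : ℝ) < (m : ℝ) + 1 := by positivity
    calc Real.sqrt n < (m : ℝ) + 1 := by
          rw [show ((m : ℝ) + 1) = Real.sqrt (((m : ℝ) + 1) ^ 2) by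
            rw [Real.sqrt_sq h2.le]]
          exact Real.sqrt_lt_sqrt (by positivity) h1
      _ = (m : ℝ) + 1 := rfl
end
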